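/- arXiv:2004.01209 — 2 statements merged into one kernel-verified Lean document; each statement's English description precedes it below -/
import Mathlib

section
/- Let (X,𝒫₁,𝒫₂) be a strongly pairwise regular bispace satisfying condition C(2). If each pairwise open cover of X has a locally finite refinement, then each pairwise open cover 𝒞 of X has a locally finite refinement ℬ such that for every B ∈ ℬ there exists C ∈ 𝒞 with 𝒫₁-cl(B) ∪ 𝒫₂-cl(B) ⊆ C. -/
open Set

variable {X : Type*}

/-- A σ-space structure: contains ∅ and univ, closed under countable unions
and finite (binary) intersections. -/
def IsSigmaStructure (P : Set (Set X)) : Prop :=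
  ∅ ∈ P ∧ Set.univ ∈ P ∧
  (∀ S : Set (Set X), S.Countable → S ⊆ P → ⋃₀ S ∈ P) ∧
  (∀ U ∈ P, ∀ V ∈ P, U ∩ V ∈ P)

/-- The 𝒫-closure of M: intersection of all 𝒫-closed sets containing M. -/
def sCl (P : Set (Set X)) (M : Set X) : Set X :=
  ⋂₀ {F | Fᶜ ∈ P ∧ M ⊆ F}

/-- A collection is locally finite if every point has a 𝒫-open neighborhood
meeting only finitely many members. -/
def SLocallyFinite (P : Set (Set X)) (A : Set (Set X)) : Prop :=
  ∀ x : X, ∃ N ∈ P, x ∈ N ∧ {a ∈ A | (a ∩ N).Nonempty}.Finite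

/-- A pairwise open cover of the bispace (X, P, Q). -/
def PairwiseOpenCover (P Q : Set (Set X)) (B : Set (Set X)) : Prop :=
  ⋃₀ B = Set.univ ∧ B ⊆ P ∪ Q ∧
  (∃ U ∈ B, U ∈ P ∧ U.Nonempty) ∧ (∃ V ∈ B, V ∈ Q ∧ V.Nonempty)

/-- B is a parallel refinement of the pairwise open cover A. -/
def ParallelRefinement (P Q : Set (Set X)) (A B : Set (Set X)) : Prop :=
  PairwiseOpenCover P Q B ∧
  (∀ U ∈ B, U ∈ P → ∃ V ∈ A, V ∈ P ∧ U ⊆ V) ∧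
  (∀ U ∈ B, U ∈ Q → ∃ V ∈ A, V ∈ Q ∧ U ⊆ V)

/-- M is 𝒫_{𝒰x}-open. -/
def PUxOpen (P Q : Set (Set X)) (U : Set (Set X)) (x : X) (M : Set X) : Prop :=
  ((∃ W ∈ U, W ∈ P ∧ x ∈ W) ∧ M ∈ P) ∨ ((∃ W ∈ U, W ∈ Q ∧ x ∈ W) ∧ M ∈ Q)

/-- B is a locally finite refinement of the pairwise open cover A. -/
def LocallyFiniteRefinement (P Q : Set (Set X)) (A B : Set (Set X)) : Prop :=
  ⋃₀ B = Set.univ ∧ (∀ b ∈ B, ∃ a ∈ A, b ⊆ a) ∧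
  ∀ x : X, ∃ N, PUxOpen P Q A x N ∧ x ∈ N ∧ {b ∈ B | (b ∩ N).Nonempty}.Finite

/-- Pairwise paracompactness: every pairwise open cover has a parallel
refinement which is a locally finite refinement of it. -/
def PairwiseParacompact (P Q : Set (Set X)) : Prop :=
  ∀ A, PairwiseOpenCover P Q A →
    ∃ B, ParallelRefinement P Q A B ∧ LocallyFiniteRefinement P Q A B

def PairwiseHausdorff (P Q : Set (Set X)) : Prop :=
  ∀ x y : X, x ≠ y → ∃ U ∈ P, ∃ V ∈ Q, x ∈ U ∧ y ∈ V ∧ U ∩ V = ∅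

def PairwiseNormal (P Q : Set (Set X)) : Prop :=
  ∀ F₁ F₂ : Set X, F₁ᶜ ∈ P → F₂ᶜ ∈ Q → F₁ ∩ F₂ = ∅ →
    ∃ G₁ ∈ P, ∃ G₂ ∈ Q, F₁ ⊆ G₂ ∧ F₂ ⊆ G₁ ∧ G₁ ∩ G₂ = ∅

/-- P is regular with respect to Q. -/
def RegularWrt (P Q : Set (Set X)) : Prop :=
  ∀ (x : X) (F : Set X), Fᶜ ∈ P → x ∉ F →
    ∃ U ∈ P, ∃ V ∈ Q, x ∈ U ∧ F ⊆ V ∧ U ∩ V = ∅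

def PairwiseRegular (P Q : Set (Set X)) : Prop :=
  RegularWrt P Q ∧ RegularWrt Q P

/-- Regularity of a single σ-space. -/
def SRegular (P : Set (Set X)) : Prop := RegularWrt P P

def StronglyPairwiseRegular (P Q : Set (Set X)) : Prop :=
  PairwiseRegular P Q ∧ SRegular P ∧ SRegular Q

/-- Half of condition C(1). -/
def CondC1Half (P Q : Set (Set X)) : Prop :=
  ∀ (FA FB : Set (Set X)), FA ⊆ P → (∀ F ∈ FB, Fᶜ ∈ Q) →
    ⋃₀ FA ⊆ ⋂₀ FB → ∃ K ∈ P, ⋃₀ FA ⊆ K ∧ K ⊆ ⋂₀ FB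

/-- Condition C(1). -/
def CondC1 (P Q : Set (Set X)) : Prop := CondC1Half P Q ∧ CondC1Half Q P

/-- Condition C(2) for a fixed i (Pi ∈ {P, Q}). -/
def CondC2Half (P Q Pi : Set (Set X)) : Prop :=
  ∀ (M : Set X) (B : Set (Set X)), B ⊆ P ∪ Q →
    (∀ b ∈ B, sCl Pi b ∩ M = ∅) →
    ∃ S ∈ Pi, M ⊆ S ∧ S ⊆ (⋃ b ∈ B, sCl Pi b)ᶜ

/-- Condition C(2). -/
def CondC2 (P Q : Set (Set X)) : Prop := CondC2Half P Q P ∧ CondC2Half P Q Q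

/-- Paracompactness of a single σ-space: every open cover has a locally
finite open refinement covering X. -/
def SParacompact (P : Set (Set X)) : Prop :=
  ∀ A ⊆ P, ⋃₀ A = Set.univ →
    ∃ B ⊆ P, ⋃₀ B = Set.univ ∧ (∀ b ∈ B, ∃ a ∈ A, b ⊆ a) ∧ SLocallyFinite P B

lemma subset_sCl (Pi : Set (Set X)) (M : Set X) : M ⊆ sCl Pi M := by
  intro x hx
  exact Set.mem_sInter.mpr fun F hF => hF.2 hx

lemma sCl_subset_of_closed {Pi : Set (Set X)} {M F : Set X} (h1 : Fᶜ ∈ Pi) (h2 : M ⊆ F) :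
    sCl Pi M ⊆ F := fun x hx => Set.mem_sInter.mp hx F ⟨h1, h2⟩

lemma sCl_mono {Pi : Set (Set X)} {M N : Set X} (h : M ⊆ N) : sCl Pi M ⊆ sCl Pi N :=
  fun x hx => Set.mem_sInter.mpr fun F hF => Set.mem_sInter.mp hx F ⟨hF.1, h.trans hF.2⟩

lemma shrinkP {P Q : Set (Set X)} (hP : IsSigmaStructure P)
    (hReg : StronglyPairwiseRegular P Q) {O : Set X} (hO : O ∈ P) {z : X} (hz : z ∈ O) :
    ∃ W ∈ P, z ∈ W ∧ sCl P W ⊆ O ∧ sCl Q W ⊆ O := by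
  obtain ⟨U, hU, V, hV, hzU, hOV, hUV⟩ := hReg.1.1 z Oᶜ (by simpa using hO) (fun h' => h' hz)
  obtain ⟨U', hU', V', hV', hzU', hOV', hUV'⟩ := hReg.2.1 z Oᶜ (by simpa using hO) (fun h' => h' hz)
  have hUV'sub : U ∩ U' ⊆ V'ᶜ := fun w hw hwV' =>
    Set.eq_empty_iff_forall_notMem.mp hUV' w ⟨hw.2, hwV'⟩
  have hUVsub : U ∩ U' ⊆ Vᶜ := fun w hw hwV =>
    Set.eq_empty_iff_forall_notMem.mp hUV w ⟨hw.1, hwV⟩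
  have hV'O : V'ᶜ ⊆ O := fun w hw => by
    by_contra hwO; exact hw (hOV' hwO)
  have hVO : Vᶜ ⊆ O := fun w hw => by
    by_contra hwO; exact hw (hOV hwO)
  exact ⟨U ∩ U', hP.2.2.2 U hU U' hU', ⟨hzU, hzU'⟩,
    (sCl_subset_of_closed (by simpa using hV') hUV'sub).trans hV'O,
    (sCl_subset_of_closed (by simpa using hV) hUVsub).trans hVO⟩

lemma shrinkQ {P Q : Set (Set X)} (hQ : IsSigmaStructure Q)
    (hReg : StronglyPairwiseRegular P Q) {O : Set X} (hO : O ∈ Q) {z : X} (hz : z ∈ O) :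
    ∃ W ∈ Q, z ∈ W ∧ sCl P W ⊆ O ∧ sCl Q W ⊆ O := by
  have hReg' : StronglyPairwiseRegular Q P := ⟨⟨hReg.1.2, hReg.1.1⟩, hReg.2.2, hReg.2.1⟩
  obtain ⟨W, hW, hzW, h1, h2⟩ := shrinkP hQ hReg' hO hz
  exact ⟨W, hW, hzW, h2, h1⟩

lemma shrinkOr {P Q : Set (Set X)} (hP : IsSigmaStructure P) (hQ : IsSigmaStructure Q)
    (hReg : StronglyPairwiseRegular P Q) {O : Set X} (hO : O ∈ P ∨ O ∈ Q) {z : X} (hz : z ∈ O) :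
    ∃ W, (W ∈ P ∨ W ∈ Q) ∧ z ∈ W ∧ sCl P W ⊆ O ∧ sCl Q W ⊆ O := by
  rcases hO with h' | h'
  · obtain ⟨W, hW, hrest⟩ := shrinkP hP hReg h' hz
    exact ⟨W, Or.inl hW, hrest⟩
  · obtain ⟨W, hW, hrest⟩ := shrinkQ hQ hReg h' hz
    exact ⟨W, Or.inr hW, hrest⟩

theorem stmt_3 {X : Type*} (P Q : Set (Set X))
    (hP : IsSigmaStructure P) (hQ : IsSigmaStructure Q)
    (hReg : StronglyPairwiseRegular P Q) (hC2 : CondC2 P Q)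
    (h : ∀ C, PairwiseOpenCover P Q C → ∃ B, LocallyFiniteRefinement P Q C B) :
    ∀ C, PairwiseOpenCover P Q C →
      ∃ B, LocallyFiniteRefinement P Q C B ∧
        ∀ b ∈ B, ∃ c ∈ C, sCl P b ∪ sCl Q b ⊆ c := by
  obtain ⟨hC2P, hC2Q⟩ := hC2
  intro C hC
  obtain ⟨hCcov, hCsub, ⟨CP, hCPC, hCPP, hCPne⟩, ⟨CQ, hCQC, hCQQ, hCQne⟩⟩ := hC
  have hmemC : ∀ z : X, ∃ c ∈ C, z ∈ c := by
    intro z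
    have hz : z ∈ ⋃₀ C := by rw [hCcov]; exact Set.mem_univ z
    exact hz
  set A : Set (Set X) := {W | (W ∈ P ∨ W ∈ Q) ∧ ∃ c ∈ C, sCl P W ⊆ c ∧ sCl Q W ⊆ c} with hAdef
  have hmemA : ∀ c ∈ C, ∀ z ∈ c, ∃ W ∈ A, z ∈ W := by
    intro c hcC z hzc
    rcases (Set.mem_union _ _ _).mp (hCsub hcC) with hcP | hcQ
    · obtain ⟨W, hWP, hzW, h1, h2⟩ := shrinkP hP hReg hcP hzc
      exact ⟨W, ⟨Or.inl hWP, c, hcC, h1, h2⟩, hzW⟩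
    · obtain ⟨W, hWQ, hzW, h1, h2⟩ := shrinkQ hQ hReg hcQ hzc
      exact ⟨W, ⟨Or.inr hWQ, c, hcC, h1, h2⟩, hzW⟩
  have hApoc : PairwiseOpenCover P Q A := by
    refine ⟨?_, ?_, ?_, ?_⟩
    · apply Set.eq_univ_of_forall
      intro z
      obtain ⟨c, hcC, hzc⟩ := hmemC z
      obtain ⟨W, hWA, hzW⟩ := hmemA c hcC z hzc
      exact ⟨W, hWA, hzW⟩
    · intro W hW
      exact (Set.mem_union _ _ _).mpr hW.1
    · obtain ⟨p, hp⟩ := hCPne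
      obtain ⟨W, hWP, hzW, h1, h2⟩ := shrinkP hP hReg hCPP hp
      exact ⟨W, ⟨Or.inl hWP, CP, hCPC, h1, h2⟩, hWP, ⟨p, hzW⟩⟩
    · obtain ⟨q, hq⟩ := hCQne
      obtain ⟨W, hWQ, hzW, h1, h2⟩ := shrinkQ hQ hReg hCQQ hq
      exact ⟨W, ⟨Or.inr hWQ, CQ, hCQC, h1, h2⟩, hWQ, ⟨q, hzW⟩⟩
  obtain ⟨B, hBcov, hBref, hBloc⟩ := h A hApoc
  choose N hNopen hNmem hNfin using hBloc
  have hNPQ : ∀ x, N x ∈ P ∨ N x ∈ Q := fun x =>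
    (hNopen x).elim (fun h' => Or.inl h'.2) (fun h' => Or.inr h'.2)
  have hMex : ∀ x : X, ∃ W, (W ∈ P ∨ W ∈ Q) ∧ x ∈ W ∧ sCl P W ⊆ N x ∧ sCl Q W ⊆ N x := by
    intro x
    rcases hNPQ x with h' | h'
    · obtain ⟨W, hW, hxW, h1, h2⟩ := shrinkP hP hReg h' (hNmem x)
      exact ⟨W, Or.inl hW, hxW, h1, h2⟩
    · obtain ⟨W, hW, hxW, h1, h2⟩ := shrinkQ hQ hReg h' (hNmem x)
      exact ⟨W, Or.inr hW, hxW, h1, h2⟩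
  choose M hMPQ hMmem hMP hMQ using hMex
  have hkey : ∀ b : Set X, ∃ O c : Set X, b ∈ B →
      b ⊆ O ∧ (O ∈ P ∨ O ∈ Q) ∧ c ∈ C ∧ sCl P O ⊆ c ∧ sCl Q O ⊆ c ∧
      ∀ x : X, x ∈ O → (b ∩ N x).Nonempty := by
    intro b
    by_cases hb : b ∈ B
    · obtain ⟨a, haA, hba⟩ := hBref b hb
      obtain ⟨haPQ, c, hcC, haclP, haclQ⟩ := haA
      rcases haPQ with haP | haQ
      · obtain ⟨S, hSP, hbS, hSav⟩ := hC2P b {n | (∃ z, n = M z) ∧ sCl P n ∩ b = ∅}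
          (by rintro n ⟨⟨z, rfl⟩, -⟩; exact (Set.mem_union _ _ _).mpr (hMPQ z))
          (fun n hn => hn.2)
        refine ⟨S ∩ a, c, fun _ => ⟨Set.subset_inter hbS hba,
          Or.inl (hP.2.2.2 S hSP a haP), hcC,
          (sCl_mono Set.inter_subset_right).trans haclP,
          (sCl_mono Set.inter_subset_right).trans haclQ, ?_⟩⟩
        intro x hx
        by_contra hemp
        have hdisj : sCl P (M x) ∩ b = ∅ := by
          apply Set.eq_empty_iff_forall_notMem.mpr
          rintro w ⟨hw1, hw2⟩
          exact hemp ⟨w, hw2, hMP x hw1⟩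
        have hmem : M x ∈ {n | (∃ z, n = M z) ∧ sCl P n ∩ b = ∅} := ⟨⟨x, rfl⟩, hdisj⟩
        exact (hSav hx.1) (Set.mem_biUnion hmem (subset_sCl P (M x) (hMmem x)))
      · obtain ⟨S, hSQ, hbS, hSav⟩ := hC2Q b {n | (∃ z, n = M z) ∧ sCl Q n ∩ b = ∅}
          (by rintro n ⟨⟨z, rfl⟩, -⟩; exact (Set.mem_union _ _ _).mpr (hMPQ z))
          (fun n hn => hn.2)
        refine ⟨S ∩ a, c, fun _ => ⟨Set.subset_inter hbS hba,
          Or.inr (hQ.2.2.2 S hSQ a haQ), hcC,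
          (sCl_mono Set.inter_subset_right).trans haclP,
          (sCl_mono Set.inter_subset_right).trans haclQ, ?_⟩⟩
        intro x hx
        by_contra hemp
        have hdisj : sCl Q (M x) ∩ b = ∅ := by
          apply Set.eq_empty_iff_forall_notMem.mpr
          rintro w ⟨hw1, hw2⟩
          exact hemp ⟨w, hw2, hMQ x hw1⟩
        have hmem : M x ∈ {n | (∃ z, n = M z) ∧ sCl Q n ∩ b = ∅} := ⟨⟨x, rfl⟩, hdisj⟩
        exact (hSav hx.1) (Set.mem_biUnion hmem (subset_sCl Q (M x) (hMmem x)))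
    · exact ⟨∅, ∅, fun hb' => absurd hb' hb⟩
  choose Ob cb hOb using hkey
  refine ⟨{β | ∃ b ∈ B, β = Ob b}, ⟨?_, ?_, ?_⟩, ?_⟩
  · apply Set.eq_univ_of_forall
    intro z
    have hz : z ∈ ⋃₀ B := by rw [hBcov]; exact Set.mem_univ z
    obtain ⟨b, hb, hzb⟩ := hz
    exact ⟨Ob b, ⟨b, hb, rfl⟩, (hOb b hb).1 hzb⟩
  · rintro β ⟨b, hb, rfl⟩
    exact ⟨cb b, (hOb b hb).2.2.1,
      (subset_sCl P (Ob b)).trans (hOb b hb).2.2.2.1⟩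
  · intro x
    obtain ⟨c₀, hc₀C, hxc₀⟩ := hmemC x
    rcases (Set.mem_union _ _ _).mp (hCsub hc₀C) with hc₀P | hc₀Q
    · obtain ⟨S, hSP, hxS, hSav⟩ := hC2P {x} {γ | (γ ∈ P ∨ γ ∈ Q) ∧ sCl P γ ∩ {x} = ∅}
        (fun γ hγ => (Set.mem_union _ _ _).mpr hγ.1) (fun γ hγ => hγ.2)
      refine ⟨S, Or.inl ⟨⟨c₀, hc₀C, hc₀P, hxc₀⟩, hSP⟩, hxS rfl, ?_⟩
      apply Set.Finite.subset ((hNfin x).image Ob)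
      rintro β ⟨⟨b, hb, rfl⟩, p, hpβ, hpS⟩
      obtain ⟨γ, hγPQ, hpγ, hγP, hγQ⟩ := shrinkOr hP hQ hReg ((hOb b hb).2.1) hpβ
      have hxOb : x ∈ Ob b := by
        by_cases hxγ : x ∈ sCl P γ
        · exact hγP hxγ
        · exfalso
          have hγmem : γ ∈ {γ | (γ ∈ P ∨ γ ∈ Q) ∧ sCl P γ ∩ {x} = ∅} := by
            refine ⟨hγPQ, ?_⟩
            apply Set.eq_empty_iff_forall_notMem.mpr
            rintro w ⟨hw1, hw2⟩
            exact hxγ (by rwa [Set.mem_singleton_iff.mp hw2] at hw1)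
          exact (hSav hpS) (Set.mem_biUnion hγmem (subset_sCl P γ hpγ))
      exact ⟨b, ⟨hb, (hOb b hb).2.2.2.2.2 x hxOb⟩, rfl⟩
    · obtain ⟨S, hSQ, hxS, hSav⟩ := hC2Q {x} {γ | (γ ∈ P ∨ γ ∈ Q) ∧ sCl Q γ ∩ {x} = ∅}
        (fun γ hγ => (Set.mem_union _ _ _).mpr hγ.1) (fun γ hγ => hγ.2)
      refine ⟨S, Or.inr ⟨⟨c₀, hc₀C, hc₀Q, hxc₀⟩, hSQ⟩, hxS rfl, ?_⟩
      apply Set.Finite.subset ((hNfin x).image Ob)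
      rintro β ⟨⟨b, hb, rfl⟩, p, hpβ, hpS⟩
      obtain ⟨γ, hγPQ, hpγ, hγP, hγQ⟩ := shrinkOr hP hQ hReg ((hOb b hb).2.1) hpβ
      have hxOb : x ∈ Ob b := by
        by_cases hxγ : x ∈ sCl Q γ
        · exact hγQ hxγ
        · exfalso
          have hγmem : γ ∈ {γ | (γ ∈ P ∨ γ ∈ Q) ∧ sCl Q γ ∩ {x} = ∅} := by
            refine ⟨hγPQ, ?_⟩
            apply Set.eq_empty_iff_forall_notMem.mpr
            rintro w ⟨hw1, hw2⟩
            exact hxγ (by rwa [Set.mem_singleton_iff.mp hw2] at hw1)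
          exact (hSav hpS) (Set.mem_biUnion hγmem (subset_sCl Q γ hpγ))
      exact ⟨b, ⟨hb, (hOb b hb).2.2.2.2.2 x hxOb⟩, rfl⟩
  · rintro β ⟨b, hb, rfl⟩
    exact ⟨cb b, (hOb b hb).2.2.1,
      Set.union_subset (hOb b hb).2.2.2.1 (hOb b hb).2.2.2.2.1⟩
end

section
/- Let X = ℝ. Let τ₁ be the collection of all sets A ⊆ ℝ such that either (0,1) ⊆ ℝ \ A or A ∩ (0,1) is a union of open subintervals of (0,1); let τ₂ be the collection of all countable subsets of (0,1); let τ be the collection of all countable unions of members of τ₁ ∪ τ₂; and let σ be the usual (Euclidean) topology on ℝ. Then the bispace (ℝ, τ, σ) is strongly pairwise regular. -/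
open Set

variable {X : Type*}

/-- τ₁ of Example 3.1: sets A such that either (0,1) ⊆ ℝ \ A or
A ∩ (0,1) is a union of open subintervals of (0,1). -/
def exTau1 : Set (Set ℝ) :=
  {A | Set.Ioo (0:ℝ) 1 ⊆ Aᶜ ∨
    ∃ I : Set (Set ℝ),
      (∀ J ∈ I, ∃ a b : ℝ, J = Set.Ioo a b ∧ Set.Ioo a b ⊆ Set.Ioo (0:ℝ) 1) ∧
      A ∩ Set.Ioo (0:ℝ) 1 = ⋃₀ I}

/-- τ₂ of Example 3.1: all countable subsets of (0,1). -/
def exTau2 : Set (Set ℝ) :=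
  {A | A.Countable ∧ A ⊆ Set.Ioo (0:ℝ) 1}

/-- τ of Example 3.1: all countable unions of members of τ₁ ∪ τ₂. -/
def exTau : Set (Set ℝ) :=
  {A | ∃ f : ℕ → Set ℝ, (∀ n, f n ∈ exTau1 ∪ exTau2) ∧ A = ⋃ n, f n}

lemma mem_exTau1_of_isOpen_inter {A : Set ℝ} (h : IsOpen (A ∩ Set.Ioo 0 1)) :
    A ∈ exTau1 := by
  right
  refine ⟨{J | ∃ a b : ℝ, J = Set.Ioo a b ∧ Set.Ioo a b ⊆ A ∩ Set.Ioo 0 1}, ?_, ?_⟩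
  · rintro J ⟨a, b, rfl, hsub⟩
    exact ⟨a, b, rfl, hsub.trans (inter_subset_right)⟩
  · apply subset_antisymm
    · intro x hx
      obtain ⟨l, u, hlu, hsub⟩ := mem_nhds_iff_exists_Ioo_subset.mp (h.mem_nhds hx)
      exact ⟨Set.Ioo l u, ⟨l, u, rfl, hsub⟩, hlu⟩
    · rintro x ⟨J, ⟨a, b, rfl, hsub⟩, hx⟩
      exact hsub hx

lemma mem_exTau_of_mem_union {A : Set ℝ} (h : A ∈ exTau1 ∪ exTau2) : A ∈ exTau :=
  ⟨fun _ => A, fun _ => h, (Set.iUnion_const A).symm⟩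

lemma isOpen_mem_exTau {A : Set ℝ} (h : IsOpen A) : A ∈ exTau :=
  mem_exTau_of_mem_union (Or.inl (mem_exTau1_of_isOpen_inter (h.inter isOpen_Ioo)))

lemma singleton_mem_exTau (x : ℝ) : ({x} : Set ℝ) ∈ exTau := by
  by_cases hx : x ∈ Set.Ioo (0:ℝ) 1
  · exact mem_exTau_of_mem_union (Or.inr ⟨countable_singleton x, by simpa using hx⟩)
  · refine mem_exTau_of_mem_union (Or.inl (Or.inl ?_))
    intro y hy
    simp only [mem_compl_iff, mem_singleton_iff]
    rintro rfl; exact hx hy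

lemma compl_singleton_mem_exTau (x : ℝ) : ({x}ᶜ : Set ℝ) ∈ exTau := by
  apply mem_exTau_of_mem_union (Or.inl (mem_exTau1_of_isOpen_inter ?_))
  rw [Set.inter_comm, ← Set.diff_eq]
  exact isOpen_Ioo.sdiff isClosed_singleton

lemma euclid_reg (x : ℝ) (F : Set ℝ) (hFc : IsOpen Fᶜ) (hxF : x ∉ F) :
    ∃ ε > 0, Metric.ball x (ε/2) ∩ (Metric.closedBall x (ε/2))ᶜ = ∅ ∧
      x ∈ Metric.ball x (ε/2) ∧ F ⊆ (Metric.closedBall x (ε/2))ᶜ := by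
  obtain ⟨ε, hε, hball⟩ := Metric.isOpen_iff.mp hFc x hxF
  refine ⟨ε, hε, ?_, Metric.mem_ball_self (by linarith), ?_⟩
  · rw [Set.eq_empty_iff_forall_notMem]
    rintro y ⟨hy1, hy2⟩
    exact hy2 (Metric.ball_subset_closedBall hy1)
  · intro y hy
    simp only [mem_compl_iff, Metric.mem_closedBall, not_le]
    by_contra h
    push_neg at h
    exact hball (Metric.mem_ball.mpr (by linarith)) hy

theorem stmt_15 :
    StronglyPairwiseRegular exTau {A : Set ℝ | IsOpen A} := by
  refine ⟨⟨?_, ?_⟩, ?_, ?_⟩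
  · -- RegularWrt exTau σ
    intro x F hFc hxF
    exact ⟨{x}, singleton_mem_exTau x, {x}ᶜ, (by exact (isOpen_compl_singleton : IsOpen ({x}ᶜ))), rfl,
      Set.subset_compl_singleton_iff.mpr hxF, Set.inter_compl_self _⟩
  · -- RegularWrt σ exTau
    intro x F hFc hxF
    obtain ⟨ε, hε, hdisj, hmem, hsub⟩ := euclid_reg x F hFc hxF
    exact ⟨Metric.ball x (ε/2), (by exact (Metric.isOpen_ball : IsOpen (Metric.ball x (ε/2)))), (Metric.closedBall x (ε/2))ᶜ,
      isOpen_mem_exTau (by exact (Metric.isClosed_closedBall.isOpen_compl : IsOpen ((Metric.closedBall x (ε/2))ᶜ))), hmem, hsub, hdisj⟩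
  · -- SRegular exTau
    intro x F hFc hxF
    exact ⟨{x}, singleton_mem_exTau x, {x}ᶜ, compl_singleton_mem_exTau x, rfl,
      Set.subset_compl_singleton_iff.mpr hxF, Set.inter_compl_self _⟩
  · -- SRegular σ
    intro x F hFc hxF
    obtain ⟨ε, hε, hdisj, hmem, hsub⟩ := euclid_reg x F hFc hxF
    exact ⟨Metric.ball x (ε/2), (by exact (Metric.isOpen_ball : IsOpen (Metric.ball x (ε/2)))), (Metric.closedBall x (ε/2))ᶜ,
      (by exact (Metric.isClosed_closedBall.isOpen_compl : IsOpen ((Metric.closedBall x (ε/2))ᶜ))), hmem, hsub, hdisj⟩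
end
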